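/- For every pure push expression e₁ and every pure pop expression ē₂, there exist a pure pop expression d̄ and a pure push expression d such that the equation e₁ · ē₂ = d̄ + d is derivable in the equational theory of Kleene algebra over regular expressions on Σ augmented with the axioms push a · pop a = 1 for all a ∈ V, and push a · pop b = 0 for all a, b ∈ V with a ≠ b. -/

import Mathlib

/-- Push-pop StacKAT expressions: regular-expression terms over push/pop of values in `V`. -/
inductive Exp (V : Type) : Type
  | zero : Exp V
  | one : Exp V
  | plus : Exp V → Exp V → Exp V
  | seq : Exp V → Exp V → Exp V
  | star : Exp V → Exp V
  | push : V → Exp V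
  | pop : V → Exp V

/-- `n`-fold relational composition of a relation. -/
def relPow {α : Type*} (r : α → α → Prop) : ℕ → α → α → Prop
  | 0 => Eq
  | n + 1 => Relation.Comp r (relPow r n)

/-- The relational semantics of a push-pop StacKAT expression, as a binary relation on stacks. -/
def denote {V : Type} : Exp V → List V → List V → Prop
  | Exp.zero => fun _ _ => False
  | Exp.one => Eq
  | Exp.plus e f => fun s t => denote e s t ∨ denote f s t
  | Exp.seq e f => Relation.Comp (denote e) (denote f)
  | Exp.star e => fun s t => ∃ n, relPow (denote e) n s t
  | Exp.push v => fun s t => t = v :: s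
  | Exp.pop v => fun s t => s = v :: t

/-- Derivability in the equational theory of Kleene algebra over push-pop regular
expressions, augmented with the axioms `push a · pop a = 1` and
`push a · pop b = 0` for `a ≠ b`. Inequality `e ≤ f` is encoded as `e + f = f`. -/
inductive KAeq {V : Type} : Exp V → Exp V → Prop
  | refl (e : Exp V) : KAeq e e
  | symm {e f : Exp V} : KAeq e f → KAeq f e
  | trans {e f g : Exp V} : KAeq e f → KAeq f g → KAeq e g
  | plus_congr {e₁ e₂ f₁ f₂ : Exp V} :
      KAeq e₁ e₂ → KAeq f₁ f₂ → KAeq (e₁.plus f₁) (e₂.plus f₂)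
  | seq_congr {e₁ e₂ f₁ f₂ : Exp V} :
      KAeq e₁ e₂ → KAeq f₁ f₂ → KAeq (e₁.seq f₁) (e₂.seq f₂)
  | star_congr {e f : Exp V} : KAeq e f → KAeq e.star f.star
  | plus_assoc (e f g : Exp V) : KAeq ((e.plus f).plus g) (e.plus (f.plus g))
  | plus_comm (e f : Exp V) : KAeq (e.plus f) (f.plus e)
  | plus_idem (e : Exp V) : KAeq (e.plus e) e
  | plus_zero (e : Exp V) : KAeq (e.plus Exp.zero) e
  | seq_assoc (e f g : Exp V) : KAeq ((e.seq f).seq g) (e.seq (f.seq g))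
  | one_seq (e : Exp V) : KAeq (Exp.one.seq e) e
  | seq_one (e : Exp V) : KAeq (e.seq Exp.one) e
  | zero_seq (e : Exp V) : KAeq (Exp.zero.seq e) Exp.zero
  | seq_zero (e : Exp V) : KAeq (e.seq Exp.zero) Exp.zero
  | left_distrib (e f g : Exp V) :
      KAeq (e.seq (f.plus g)) ((e.seq f).plus (e.seq g))
  | right_distrib (e f g : Exp V) :
      KAeq ((e.plus f).seq g) ((e.seq g).plus (f.seq g))
  /-- `1 + e·e* ≤ e*` -/
  | star_unfold_left (e : Exp V) :
      KAeq ((Exp.one.plus (e.seq e.star)).plus e.star) e.star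
  /-- `1 + e*·e ≤ e*` -/
  | star_unfold_right (e : Exp V) :
      KAeq ((Exp.one.plus (e.star.seq e)).plus e.star) e.star
  /-- `b + e·x ≤ x ⟹ e*·b ≤ x` -/
  | star_fix_left {e b x : Exp V} :
      KAeq ((b.plus (e.seq x)).plus x) x → KAeq ((e.star.seq b).plus x) x
  /-- `b + x·e ≤ x ⟹ b·e* ≤ x` -/
  | star_fix_right {e b x : Exp V} :
      KAeq ((b.plus (x.seq e)).plus x) x → KAeq ((b.seq e.star).plus x) x
  /-- `push a · pop a = 1` -/
  | push_pop (a : V) : KAeq ((Exp.push a).seq (Exp.pop a)) Exp.one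
  /-- `push a · pop b = 0` for `a ≠ b` -/
  | push_pop_ne {a b : V} : a ≠ b → KAeq ((Exp.push a).seq (Exp.pop b)) Exp.zero

/-- A pure push expression: all its letters are push symbols (`0` and `1` count). -/
inductive PurePush {V : Type} : Exp V → Prop
  | zero : PurePush Exp.zero
  | one : PurePush Exp.one
  | push (v : V) : PurePush (Exp.push v)
  | plus {e f : Exp V} : PurePush e → PurePush f → PurePush (e.plus f)
  | seq {e f : Exp V} : PurePush e → PurePush f → PurePush (e.seq f)
  | star {e : Exp V} : PurePush e → PurePush e.star

/-- A pure pop expression: all its letters are pop symbols (`0` and `1` count). -/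
inductive PurePop {V : Type} : Exp V → Prop
  | zero : PurePop Exp.zero
  | one : PurePop Exp.one
  | pop (v : V) : PurePop (Exp.pop v)
  | plus {e f : Exp V} : PurePop e → PurePop f → PurePop (e.plus f)
  | seq {e f : Exp V} : PurePop e → PurePop f → PurePop (e.seq f)
  | star {e : Exp V} : PurePop e → PurePop e.star

open Computability

namespace StacKATProof

variable {V : Type}

instance kaSetoid (V : Type) : Setoid (Exp V) :=
  ⟨KAeq, ⟨KAeq.refl, fun h => h.symm, fun h h' => h.trans h'⟩⟩

abbrev KA (V : Type) : Type := Quotient (kaSetoid V)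

def mk (e : Exp V) : KA V := Quotient.mk (kaSetoid V) e

lemma sound {e f : Exp V} (h : KAeq e f) : mk e = mk f := Quot.sound h

lemma exact {e f : Exp V} (h : mk e = mk f) : KAeq e f := Quotient.exact h

instance : Zero (KA V) := ⟨mk Exp.zero⟩
instance : One (KA V) := ⟨mk Exp.one⟩
instance : Add (KA V) :=
  ⟨Quotient.map₂ Exp.plus fun _ _ h _ _ h' => KAeq.plus_congr h h'⟩
instance : Mul (KA V) :=
  ⟨Quotient.map₂ Exp.seq fun _ _ h _ _ h' => KAeq.seq_congr h h'⟩

instance : Semiring (KA V) where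
  nsmul := nsmulRec
  npow := npowRec
  add_assoc a b c := Quotient.inductionOn₃ a b c fun x y z =>
    sound (KAeq.plus_assoc x y z)
  zero_add a := Quotient.inductionOn a fun x =>
    sound ((KAeq.plus_comm Exp.zero x).trans (KAeq.plus_zero x))
  add_zero a := Quotient.inductionOn a fun x => sound (KAeq.plus_zero x)
  add_comm a b := Quotient.inductionOn₂ a b fun x y =>
    sound (KAeq.plus_comm x y)
  mul_assoc a b c := Quotient.inductionOn₃ a b c fun x y z =>
    sound (KAeq.seq_assoc x y z)
  one_mul a := Quotient.inductionOn a fun x => sound (KAeq.one_seq x)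
  mul_one a := Quotient.inductionOn a fun x => sound (KAeq.seq_one x)
  zero_mul a := Quotient.inductionOn a fun x => sound (KAeq.zero_seq x)
  mul_zero a := Quotient.inductionOn a fun x => sound (KAeq.seq_zero x)
  left_distrib a b c := Quotient.inductionOn₃ a b c fun x y z =>
    sound (KAeq.left_distrib x y z)
  right_distrib a b c := Quotient.inductionOn₃ a b c fun x y z =>
    sound (KAeq.right_distrib x y z)

instance : KStar (KA V) :=
  ⟨Quotient.map Exp.star fun _ _ h => KAeq.star_congr h⟩

@[simp] lemma mk_zero : (mk Exp.zero : KA V) = 0 := rfl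
@[simp] lemma mk_one : (mk Exp.one : KA V) = 1 := rfl
@[simp] lemma mk_plus (e f : Exp V) : mk (e.plus f) = mk e + mk f := rfl
@[simp] lemma mk_seq (e f : Exp V) : mk (e.seq f) = mk e * mk f := rfl
@[simp] lemma mk_star (e : Exp V) : mk e.star = (mk e)∗ := rfl

instance : IdemSemiring (KA V) :=
  IdemSemiring.ofSemiring fun a =>
    Quotient.inductionOn a fun x => sound (KAeq.plus_idem x)

lemma star_unfold_le (a : KA V) : 1 + a * a∗ ≤ a∗ := by
  induction a using Quotient.inductionOn with
  | h x =>
    have h := sound (KAeq.star_unfold_left x)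
    simp only [mk_plus, mk_seq, mk_star, mk_one] at h
    exact add_eq_right_iff_le.mp h

lemma star_unfold_le' (a : KA V) : 1 + a∗ * a ≤ a∗ := by
  induction a using Quotient.inductionOn with
  | h x =>
    have h := sound (KAeq.star_unfold_right x)
    simp only [mk_plus, mk_seq, mk_star, mk_one] at h
    exact add_eq_right_iff_le.mp h

instance : KleeneAlgebra (KA V) where
  one_le_kstar a := le_trans le_self_add (star_unfold_le a)
  mul_kstar_le_kstar a := le_trans le_add_self (star_unfold_le a)
  kstar_mul_le_kstar a := le_trans le_add_self (star_unfold_le' a)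
  kstar_mul_le_self a b h := by
    induction a using Quotient.inductionOn with
    | h x =>
      induction b using Quotient.inductionOn with
      | h y =>
        have hh : mk (x.seq y) + mk y = mk y := add_eq_right_iff_le.mpr (by exact h)
        have hyp : KAeq ((y.plus (x.seq y)).plus y) y := by
          have h1 : KAeq ((y.plus (x.seq y)).plus y) (y.plus ((x.seq y).plus y)) :=
            KAeq.plus_assoc _ _ _
          have h2 : KAeq (y.plus ((x.seq y).plus y)) (y.plus y) :=
            KAeq.plus_congr (KAeq.refl y) (exact hh)
          exact (h1.trans h2).trans (KAeq.plus_idem y)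
        have := sound (KAeq.star_fix_left hyp)
        simp only [mk_plus, mk_seq, mk_star] at this
        exact add_eq_right_iff_le.mp this
  mul_kstar_le_self a b h := by
    induction a using Quotient.inductionOn with
    | h x =>
      induction b using Quotient.inductionOn with
      | h y =>
        have hh : mk (y.seq x) + mk y = mk y := add_eq_right_iff_le.mpr (by exact h)
        have hyp : KAeq ((y.plus (y.seq x)).plus y) y := by
          have h1 : KAeq ((y.plus (y.seq x)).plus y) (y.plus ((y.seq x).plus y)) :=
            KAeq.plus_assoc _ _ _
          have h2 : KAeq (y.plus ((y.seq x).plus y)) (y.plus y) :=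
            KAeq.plus_congr (KAeq.refl y) (exact hh)
          exact (h1.trans h2).trans (KAeq.plus_idem y)
        have := sound (KAeq.star_fix_right hyp)
        simp only [mk_plus, mk_seq, mk_star] at this
        exact add_eq_right_iff_le.mp this

lemma mk_push_pop (a : V) : mk (Exp.push a) * mk (Exp.pop a) = 1 := by
  have := sound (KAeq.push_pop a); simpa using this

lemma mk_push_pop_ne {a b : V} (h : a ≠ b) : mk (Exp.push a) * mk (Exp.pop b) = 0 := by
  have := sound (KAeq.push_pop_ne h); simpa using this

end StacKATProof

namespace StacKATProof

variable {V : Type}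

open Finset

/-! ### Syntactic finite sums -/

def lsum : List (Exp V) → Exp V
  | [] => Exp.zero
  | e :: l => e.plus (lsum l)

lemma mk_lsum (l : List (Exp V)) : mk (lsum l) = (l.map mk).sum := by
  induction l with
  | nil => rfl
  | cons e l ih => simp only [lsum, mk_plus, List.map_cons, List.sum_cons, ih]

lemma purePop_lsum {l : List (Exp V)} (h : ∀ e ∈ l, PurePop e) : PurePop (lsum l) := by
  induction l with
  | nil => exact PurePop.zero
  | cons e l ih =>
    exact PurePop.plus (h e List.mem_cons_self) (ih fun e' he' => h e' (List.mem_cons_of_mem _ he'))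

lemma purePush_lsum {l : List (Exp V)} (h : ∀ e ∈ l, PurePush e) : PurePush (lsum l) := by
  induction l with
  | nil => exact PurePush.zero
  | cons e l ih =>
    exact PurePush.plus (h e List.mem_cons_self) (ih fun e' he' => h e' (List.mem_cons_of_mem _ he'))

noncomputable def esum {ι : Type*} (s : Finset ι) (g : ι → Exp V) : Exp V := lsum (s.toList.map g)

lemma mk_esum {ι : Type*} (s : Finset ι) (g : ι → Exp V) :
    mk (esum s g) = ∑ i ∈ s, mk (g i) := by
  rw [esum, mk_lsum, List.map_map, ← Finset.sum_map_toList]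
  rfl

lemma purePop_esum {ι : Type*} {s : Finset ι} {g : ι → Exp V} (h : ∀ i ∈ s, PurePop (g i)) :
    PurePop (esum s g) :=
  purePop_lsum fun e he => by
    obtain ⟨i, hi, rfl⟩ := List.mem_map.mp he
    exact h i (Finset.mem_toList.mp hi)

lemma purePush_esum {ι : Type*} {s : Finset ι} {g : ι → Exp V} (h : ∀ i ∈ s, PurePush (g i)) :
    PurePush (esum s g) :=
  purePush_lsum fun e he => by
    obtain ⟨i, hi, rfl⟩ := List.mem_map.mp he
    exact h i (Finset.mem_toList.mp hi)

/-! ### Order facts about sums in an idempotent semiring -/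

lemma sum_le {ι : Type*} {s : Finset ι} {g : ι → KA V} {c : KA V}
    (h : ∀ i ∈ s, g i ≤ c) : (∑ i ∈ s, g i) ≤ c := by
  classical
  induction s using Finset.induction with
  | empty => simpa using zero_le c
  | insert a s' hx ih =>
    rw [Finset.sum_insert hx]
    exact add_le (h _ (Finset.mem_insert_self _ _)) (ih fun i hi => h i (Finset.mem_insert_of_mem hi))

lemma le_sum {ι : Type*} {s : Finset ι} {g : ι → KA V} {i : ι} (hi : i ∈ s) :
    g i ≤ ∑ j ∈ s, g j :=
  Finset.single_le_sum (fun j _ => zero_le) hi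

lemma sum_congr_le {ι κ : Type*} {s : Finset ι} {t : Finset κ} {g : ι → KA V} {h : κ → KA V}
    (H : ∀ i ∈ s, ∃ k ∈ t, g i ≤ h k) : (∑ i ∈ s, g i) ≤ ∑ k ∈ t, h k :=
  sum_le fun i hi => by obtain ⟨k, hk, hle⟩ := H i hi; exact hle.trans (le_sum hk)

lemma sum_union_idem {ι : Type*} [DecidableEq ι] (s t : Finset ι) (g : ι → KA V) :
    ∑ i ∈ s ∪ t, g i = (∑ i ∈ s, g i) + ∑ i ∈ t, g i := by
  refine le_antisymm (sum_le fun i hi => ?_) (add_le ?_ ?_)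
  · rcases Finset.mem_union.mp hi with h | h
    · exact (le_sum h).trans le_self_add
    · exact (le_sum h).trans le_add_self
  · exact sum_le fun i hi => le_sum (Finset.mem_union_left _ hi)
  · exact sum_le fun i hi => le_sum (Finset.mem_union_right _ hi)

lemma sum_biUnion_idem {ι κ : Type*} [DecidableEq ι] (s : Finset κ) (t : κ → Finset ι)
    (g : ι → KA V) :
    ∑ i ∈ s.biUnion t, g i = ∑ k ∈ s, ∑ i ∈ t k, g i := by
  refine le_antisymm (sum_le fun i hi => ?_) (sum_le fun k hk => sum_le fun i hi => ?_)
  · obtain ⟨k, hk, hik⟩ := Finset.mem_biUnion.mp hi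
    exact (le_sum hik).trans (le_sum hk)
  · exact le_sum (Finset.mem_biUnion.mpr ⟨k, hk, hi⟩)

/-! ### Indicator of a proposition -/

open scoped Classical in
noncomputable def bi (p : Prop) : KA V := if p then 1 else 0

open scoped Classical in
noncomputable def biE (p : Prop) : Exp V := if p then Exp.one else Exp.zero

lemma mk_biE (p : Prop) : (mk (biE p) : KA V) = bi p := by
  classical
  by_cases h : p <;> simp [bi, biE, h]

lemma bi_true {p : Prop} (h : p) : (bi p : KA V) = 1 := by classical simp [bi, h]
lemma bi_false {p : Prop} (h : ¬ p) : (bi p : KA V) = 0 := by classical simp [bi, h]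

lemma bi_le_one (p : Prop) : (bi p : KA V) ≤ 1 := by
  classical
  by_cases h : p <;> simp [bi, h]

lemma bi_mono {p q : Prop} (h : p → q) : (bi p : KA V) ≤ bi q := by
  classical
  by_cases hp : p
  · rw [bi_true hp, bi_true (h hp)]
  · simp [bi_false hp]

lemma purePop_biE (p : Prop) : PurePop (biE (V := V) p) := by
  classical
  by_cases h : p <;> simp only [biE, h, if_true, if_false] <;>
    first | exact PurePop.one | exact PurePop.zero

lemma purePush_biE (p : Prop) : PurePush (biE (V := V) p) := by
  classical
  by_cases h : p <;> simp only [biE, h, if_true, if_false] <;>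
    first | exact PurePush.one | exact PurePush.zero

lemma sum_bi {ι : Type*} (s : Finset ι) (p : ι → Prop) :
    (∑ i ∈ s, (bi (p i) : KA V)) = bi (∃ i ∈ s, p i) := by
  classical
  refine le_antisymm (sum_le fun i hi => bi_mono fun hp => ⟨i, hi, hp⟩) ?_
  by_cases h : ∃ i ∈ s, p i
  · obtain ⟨i, hi, hp⟩ := h
    calc (bi (∃ i ∈ s, p i) : KA V) ≤ bi (p i) := by rw [bi_true hp]; exact bi_le_one _
    _ ≤ _ := le_sum (g := fun i => (bi (p i) : KA V)) hi
  · simp [bi_false h]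

/-- `a ≤ 1 → (a + b)∗ = b∗`. -/
lemma kstar_add_of_le_one {a b : KA V} (ha : a ≤ 1) : (a + b)∗ = b∗ := by
  have h2 : b∗ ≤ (a + b)∗ := kstar_mono (le_add_self : b ≤ a + b)
  refine le_antisymm ?_ h2
  have h3 : (a + b) * b∗ ≤ b∗ := by
    rw [add_mul]
    refine add_le ?_ mul_kstar_le_kstar
    calc a * b∗ ≤ 1 * b∗ := mul_le_mul_left ha _
    _ = b∗ := one_mul _
  exact kstar_le_of_mul_le_right (one_le_kstar (a := b)) h3

lemma kstar_unfold (a : KA V) : a∗ = 1 + a * a∗ := by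
  refine le_antisymm ?_ (star_unfold_le a)
  refine kstar_le_of_mul_le_left le_self_add ?_
  calc (1 + a * a∗) * a = a + a * (a∗ * a) := by rw [add_mul, one_mul, mul_assoc]
  _ ≤ a * a∗ + a * a∗ :=
      add_le_add (le_mul_of_one_le_right' one_le_kstar) (mul_le_mul_right kstar_mul_le_kstar _)
  _ ≤ 1 + a * a∗ := by rw [add_idem]; exact le_add_self

end StacKATProof

namespace StacKATProof

open Finset

variable {V : Type} [Fintype V]

lemma bi_congr {p q : Prop} (h : p ↔ q) : (bi p : KA V) = bi q := by
  classical
  by_cases hp : p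
  · rw [bi_true hp, bi_true (h.mp hp)]
  · rw [bi_false hp, bi_false (fun hq => hp (h.mpr hq))]

lemma sum_image_of_inj {ι κ : Type*} [DecidableEq κ] {f : ι → κ}
    (hf : Function.Injective f) (s : Finset ι) (g : κ → KA V) :
    ∑ k ∈ s.image f, g k = ∑ i ∈ s, g (f i) :=
  Finset.sum_image fun x _ y _ h => hf h

/-- A "pop NFA with solutions": states, solution expressions, acceptance, transitions, starts. -/
structure PopNFA (V : Type) where
  Q : Type
  [fin : Fintype Q]
  [dec : DecidableEq Q]
  x : Q → Exp V
  acc : Q → Prop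
  Δ : Q → V → Finset Q
  I : Finset Q

attribute [instance] PopNFA.fin PopNFA.dec

def Good (A : PopNFA V) : Prop :=
  (∀ q, PurePop (A.x q)) ∧
  ∀ q, mk (A.x q) =
    bi (A.acc q) + ∑ b : V, mk (Exp.pop b) * ∑ q' ∈ A.Δ q b, mk (A.x q')

lemma start_sum_eq (A : PopNFA V) (hA : Good A) (s : Finset A.Q) :
    ∑ q ∈ s, mk (A.x q) =
      bi (∃ q ∈ s, A.acc q) +
        ∑ b : V, mk (Exp.pop b) * ∑ q' ∈ s.biUnion (fun q => A.Δ q b), mk (A.x q') := by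
  calc ∑ q ∈ s, mk (A.x q)
      = ∑ q ∈ s, (bi (A.acc q) + ∑ b : V, mk (Exp.pop b) * ∑ q' ∈ A.Δ q b, mk (A.x q')) :=
        Finset.sum_congr rfl fun q _ => hA.2 q
    _ = (∑ q ∈ s, (bi (A.acc q) : KA V)) +
          ∑ q ∈ s, ∑ b : V, mk (Exp.pop b) * ∑ q' ∈ A.Δ q b, mk (A.x q') :=
        Finset.sum_add_distrib
    _ = bi (∃ q ∈ s, A.acc q) +
          ∑ b : V, ∑ q ∈ s, mk (Exp.pop b) * ∑ q' ∈ A.Δ q b, mk (A.x q') := by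
        rw [sum_bi, Finset.sum_comm]
    _ = _ := by
        congr 1
        refine Finset.sum_congr rfl fun b _ => ?_
        rw [← Finset.mul_sum, sum_biUnion_idem]

open scoped Classical in
/-- Key expansion lemma: multiplying a solution by an expanded value on the right. -/
lemma seq_expand {A : PopNFA V} (hA : Good A) (qa : A.Q) (T : KA V) (P : Prop) (Y : V → KA V)
    (hT : T = bi P + ∑ b : V, mk (Exp.pop b) * Y b) :
    mk (A.x qa) * T =
      bi (A.acc qa ∧ P) + ∑ b : V, mk (Exp.pop b) *
        ((∑ q' ∈ A.Δ qa b, mk (A.x q') * T) + (if A.acc qa then Y b else 0)) := by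
  have hsum : ∀ b : V, (mk (Exp.pop b) * ∑ q' ∈ A.Δ qa b, mk (A.x q')) * T
      = mk (Exp.pop b) * ∑ q' ∈ A.Δ qa b, (mk (A.x q') * T) := by
    intro b; rw [mul_assoc, Finset.sum_mul]
  rw [hA.2 qa, add_mul, Finset.sum_mul, Finset.sum_congr rfl fun b _ => hsum b]
  by_cases h : A.acc qa
  · simp only [if_pos h]
    rw [bi_true h, one_mul,
      show bi (A.acc qa ∧ P) = (bi P : KA V) from bi_congr (and_iff_right h)]
    nth_rewrite 1 [hT]
    rw [add_assoc, ← Finset.sum_add_distrib]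
    congr 1
    refine Finset.sum_congr rfl fun b _ => ?_
    rw [← mul_add, add_comm (Y b)]
  · simp only [if_neg h, add_zero]
    rw [bi_false h, zero_mul, zero_add, bi_false (fun hc => h hc.1), zero_add]

theorem pop_nfa {f : Exp V} (hf : PurePop f) :
    ∃ A : PopNFA V, Good A ∧ mk f = ∑ q ∈ A.I, mk (A.x q) := by
  classical
  induction hf with
  | zero =>
    refine ⟨{ Q := PUnit, x := fun _ => Exp.zero, acc := fun _ => False,
              Δ := fun _ _ => ∅, I := ∅ }, ⟨fun _ => PurePop.zero, fun q => ?_⟩, ?_⟩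
    · simp [bi_false not_false]
    · simp
  | one =>
    refine ⟨{ Q := PUnit, x := fun _ => Exp.one, acc := fun _ => True,
              Δ := fun _ _ => ∅, I := {PUnit.unit} }, ⟨fun _ => PurePop.one, fun q => ?_⟩, ?_⟩
    · simp [bi_true trivial]
    · simp
  | pop c =>
    refine ⟨{ Q := Bool, x := fun q => cond q Exp.one (Exp.pop c),
              acc := fun q => q = true,
              Δ := fun q b => cond q ∅ (if b = c then {true} else ∅),
              I := {false} }, ⟨fun q => ?_, fun q => ?_⟩, ?_⟩
    · cases q with
      | true => exact PurePop.one
      | false => exact PurePop.pop c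
    · cases q with
      | true =>
        rw [show bi ((true : Bool) = true) = (1 : KA V) from bi_true rfl]
        simp
      | false =>
        rw [bi_false (by simp), zero_add]
        have hs : ∀ b : V, mk (Exp.pop b) *
            (∑ q' ∈ (if b = c then ({true} : Finset Bool) else ∅),
              mk (cond q' Exp.one (Exp.pop c))) = if b = c then mk (Exp.pop b) else 0 := by
          intro b; by_cases hb : b = c <;> simp [hb]
        calc mk (Exp.pop c)
            = ∑ b : V, (if b = c then mk (Exp.pop b) else 0) := by
              rw [Finset.sum_ite_eq' Finset.univ c (fun b => mk (Exp.pop b))]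
              simp
          _ = _ := Finset.sum_congr rfl fun b _ => (hs b).symm
    · rw [Finset.sum_singleton]
      rfl
  | plus hf hg ihf ihg =>
    obtain ⟨A, hA, hfA⟩ := ihf
    obtain ⟨B, hB, hgB⟩ := ihg
    refine ⟨{ Q := A.Q ⊕ B.Q,
              x := Sum.elim A.x B.x,
              acc := Sum.elim A.acc B.acc,
              Δ := fun q b => Sum.elim (fun qa => (A.Δ qa b).image Sum.inl)
                (fun qb => (B.Δ qb b).image Sum.inr) q,
              I := A.I.image Sum.inl ∪ B.I.image Sum.inr },
            ⟨fun q => ?_, fun q => ?_⟩, ?_⟩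
    · cases q with
      | inl qa => exact hA.1 qa
      | inr qb => exact hB.1 qb
    · cases q with
      | inl qa =>
        simp only [Sum.elim_inl, sum_image_of_inj Sum.inl_injective]
        exact hA.2 qa
      | inr qb =>
        simp only [Sum.elim_inr, sum_image_of_inj Sum.inr_injective]
        exact hB.2 qb
    · rw [mk_plus, hfA, hgB, sum_union_idem,
        sum_image_of_inj Sum.inl_injective, sum_image_of_inj Sum.inr_injective]
      rfl
  | seq hf hg ihf ihg =>
    obtain ⟨A, hA, hfA⟩ := ihf
    obtain ⟨B, hB, hgB⟩ := ihg
    set G : KA V := ∑ s ∈ B.I, mk (B.x s) with hGdef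
    have hG := start_sum_eq B hB B.I
    refine ⟨{ Q := A.Q ⊕ B.Q,
              x := Sum.elim (fun qa => (A.x qa).seq (esum B.I B.x)) B.x,
              acc := Sum.elim (fun qa => A.acc qa ∧ ∃ s ∈ B.I, B.acc s) B.acc,
              Δ := fun q b => Sum.elim
                (fun qa => ((A.Δ qa b).image Sum.inl) ∪
                  (if A.acc qa then (B.I.biUnion (fun s => B.Δ s b)).image Sum.inr else ∅))
                (fun qb => (B.Δ qb b).image Sum.inr) q,
              I := A.I.image Sum.inl },
            ⟨fun q => ?_, fun q => ?_⟩, ?_⟩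
    · cases q with
      | inl qa => exact PurePop.seq (hA.1 qa) (purePop_esum fun s _ => hB.1 s)
      | inr qb => exact hB.1 qb
    · cases q with
      | inl qa =>
        have key := seq_expand hA qa G (∃ s ∈ B.I, B.acc s)
          (fun b => ∑ q' ∈ B.I.biUnion (fun s => B.Δ s b), mk (B.x q')) hG
        simp only [Sum.elim_inl, mk_seq, mk_esum, ← hGdef]
        rw [key]
        congr 1
        refine Finset.sum_congr rfl fun b _ => ?_
        congr 1
        rw [sum_union_idem, sum_image_of_inj Sum.inl_injective]
        congr 1
        · refine Finset.sum_congr rfl fun q' _ => ?_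
          simp only [Sum.elim_inl, mk_seq, mk_esum, ← hGdef]
        · by_cases h : A.acc qa
          · rw [if_pos h, if_pos h, sum_image_of_inj Sum.inr_injective]
            rfl
          · rw [if_neg h, if_neg h, Finset.sum_empty]
      | inr qb =>
        simp only [Sum.elim_inr, sum_image_of_inj Sum.inr_injective]
        exact hB.2 qb
    · rw [mk_seq, hfA, hgB, sum_image_of_inj Sum.inl_injective, Finset.sum_mul]
      refine Finset.sum_congr rfl fun qa _ => ?_
      simp only [Sum.elim_inl, mk_seq, mk_esum, ← hGdef, hgB]
  | star hf ihf =>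
    obtain ⟨A, hA, hfA⟩ := ihf
    set R : V → Finset A.Q := fun b => A.I.biUnion (fun s => A.Δ s b) with hRdef
    set F0 : Exp V := esum (Finset.univ : Finset V)
      (fun b => (Exp.pop b).seq (esum (R b) A.x)) with hF0def
    have hF0 : mk F0 = ∑ b : V, mk (Exp.pop b) * ∑ q' ∈ R b, mk (A.x q') := by
      rw [hF0def, mk_esum]
      exact Finset.sum_congr rfl fun b _ => by rw [mk_seq, mk_esum]
    have hstar : (∑ q ∈ A.I, mk (A.x q))∗ = (mk F0)∗ := by
      have h1 : (∑ q ∈ A.I, mk (A.x q)) = bi (∃ q ∈ A.I, A.acc q) + mk F0 := by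
        rw [start_sum_eq A hA A.I, hF0]
      rw [h1, kstar_add_of_le_one (bi_le_one _)]
    have hunf : (mk F0)∗ = 1 + ∑ b : V, mk (Exp.pop b) *
        ∑ q' ∈ R b, (mk (A.x q') * (mk F0)∗) := by
      calc (mk F0)∗ = 1 + mk F0 * (mk F0)∗ := kstar_unfold _
        _ = 1 + (∑ b : V, mk (Exp.pop b) * ∑ q' ∈ R b, mk (A.x q')) * (mk F0)∗ :=
          congrArg (fun z => 1 + z * (mk F0)∗) hF0
        _ = _ := by
          rw [Finset.sum_mul]
          congr 1
          refine Finset.sum_congr rfl fun b _ => ?_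
          rw [mul_assoc, Finset.sum_mul]
    refine ⟨{ Q := Option A.Q,
              x := fun q => match q with
                | none => F0.star
                | some qa => (A.x qa).seq F0.star,
              acc := fun q => match q with
                | none => True
                | some qa => A.acc qa,
              Δ := fun q b => match q with
                | none => (R b).image some
                | some qa => ((A.Δ qa b).image some) ∪
                    (if A.acc qa then (R b).image some else ∅),
              I := {none} },
            ⟨fun q => ?_, fun q => ?_⟩, ?_⟩
    · cases q with
      | none => exact PurePop.star (purePop_esum fun b _ =>
          PurePop.seq (PurePop.pop b) (purePop_esum fun q' _ => hA.1 q'))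
      | some qa => exact PurePop.seq (hA.1 qa) (PurePop.star (purePop_esum fun b _ =>
          PurePop.seq (PurePop.pop b) (purePop_esum fun q' _ => hA.1 q')))
    · cases q with
      | none =>
        rw [show mk (match (none : Option A.Q) with
            | none => F0.star
            | some qa => (A.x qa).seq F0.star) = (mk F0)∗ from rfl,
          bi_true trivial]
        conv_lhs => rw [hunf]
        congr 1
        refine Finset.sum_congr rfl fun b _ => ?_
        rw [sum_image_of_inj (Option.some_injective _)]
        rfl
      | some qa =>
        have key := seq_expand hA qa ((mk F0)∗) True
          (fun b => ∑ q' ∈ R b, (mk (A.x q') * (mk F0)∗))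
          (by rw [bi_true trivial]; exact hunf)
        rw [show mk (match (some qa : Option A.Q) with
            | none => F0.star
            | some qa => (A.x qa).seq F0.star) = mk (A.x qa) * (mk F0)∗ from rfl]
        rw [key, show bi (A.acc qa ∧ True) = (bi (A.acc qa) : KA V) from bi_congr (and_iff_left trivial)]
        congr 1
        refine Finset.sum_congr rfl fun b _ => ?_
        congr 1
        rw [sum_union_idem, sum_image_of_inj (Option.some_injective _)]
        congr 1
        by_cases h : A.acc qa
        · rw [if_pos h, if_pos h, sum_image_of_inj (Option.some_injective _)]
          rfl
        · rw [if_neg h, if_neg h, Finset.sum_empty]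
    · rw [mk_star, hfA, hstar, Finset.sum_singleton]
      rfl

end StacKATProof

namespace StacKATProof

open Finset

variable {V : Type} [Fintype V]

theorem push_key {e : Exp V} (he : PurePush e) (A : PopNFA V) (hA : Good A) :
    ∃ (S : A.Q → Finset A.Q) (D : A.Q → Exp V),
      (∀ q, PurePush (D q)) ∧
      ∀ q, mk e * mk (A.x q) = (∑ q' ∈ S q, mk (A.x q')) + mk (D q) := by
  classical
  induction he with
  | zero =>
    exact ⟨fun _ => ∅, fun _ => Exp.zero, fun _ => PurePush.zero, fun q => by simp⟩
  | one =>
    exact ⟨fun q => {q}, fun _ => Exp.zero, fun _ => PurePush.zero, fun q => by simp⟩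
  | push v =>
    refine ⟨fun q => A.Δ q v, fun q => if A.acc q then Exp.push v else Exp.zero,
      fun q => ?_, fun q => ?_⟩
    · show PurePush (if A.acc q then Exp.push v else Exp.zero)
      by_cases h : A.acc q
      · rw [if_pos h]; exact PurePush.push v
      · rw [if_neg h]; exact PurePush.zero
    · have hb : ∀ b : V, mk (Exp.push v) * (mk (Exp.pop b) * ∑ q' ∈ A.Δ q b, mk (A.x q')) =
          if v = b then ∑ q' ∈ A.Δ q b, mk (A.x q') else 0 := by
        intro b
        by_cases h : v = b
        · subst h; rw [← mul_assoc, mk_push_pop, one_mul, if_pos rfl]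
        · rw [← mul_assoc, mk_push_pop_ne h, zero_mul, if_neg h]
      have hacc : mk (Exp.push v) * bi (A.acc q) =
          mk (if A.acc q then Exp.push v else Exp.zero) := by
        by_cases h : A.acc q
        · rw [bi_true h, mul_one, if_pos h]
        · rw [bi_false h, mul_zero, if_neg h, mk_zero]
      rw [hA.2 q, mul_add, Finset.mul_sum, Finset.sum_congr rfl fun b _ => hb b,
        Finset.sum_ite_eq Finset.univ v (fun b => ∑ q' ∈ A.Δ q b, mk (A.x q')),
        if_pos (Finset.mem_univ v), hacc, add_comm]
  | plus he1 he2 ih1 ih2 =>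
    obtain ⟨S1, D1, hD1, h1⟩ := ih1
    obtain ⟨S2, D2, hD2, h2⟩ := ih2
    refine ⟨fun q => S1 q ∪ S2 q, fun q => (D1 q).plus (D2 q),
      fun q => PurePush.plus (hD1 q) (hD2 q), fun q => ?_⟩
    rw [mk_plus, add_mul, h1 q, h2 q, mk_plus, sum_union_idem, add_add_add_comm]
  | @seq e1 e2 he1 he2 ih1 ih2 =>
    obtain ⟨S1, D1, hD1, h1⟩ := ih1
    obtain ⟨S2, D2, hD2, h2⟩ := ih2
    refine ⟨fun q => (S2 q).biUnion S1, fun q => (esum (S2 q) D1).plus (e1.seq (D2 q)),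
      fun q => PurePush.plus (purePush_esum fun q' _ => hD1 q') (PurePush.seq he1 (hD2 q)),
      fun q => ?_⟩
    rw [mk_seq, mul_assoc, h2 q, mul_add, Finset.mul_sum,
      Finset.sum_congr rfl fun q' _ => h1 q', Finset.sum_add_distrib,
      mk_plus, mk_esum, mk_seq, sum_biUnion_idem, add_assoc]
  | @star e1 he1 ih =>
    obtain ⟨S1, D1, hD1, h1⟩ := ih
    set Rel : A.Q → A.Q → Prop := fun a b => b ∈ S1 a with hRel
    set Sh : A.Q → Finset A.Q :=
      fun q => Finset.univ.filter (fun q' => Relation.ReflTransGen Rel q q') with hSh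
    have self_mem : ∀ q, q ∈ Sh q := fun q =>
      Finset.mem_filter.mpr ⟨Finset.mem_univ _, Relation.ReflTransGen.refl⟩
    have closed : ∀ q q' q'', q' ∈ Sh q → q'' ∈ S1 q' → q'' ∈ Sh q := by
      intro q q' q'' hq' hq''
      exact Finset.mem_filter.mpr ⟨Finset.mem_univ _,
        (Finset.mem_filter.mp hq').2.tail hq''⟩
    have reach_le : ∀ q q', Relation.ReflTransGen Rel q q' →
        mk (A.x q') ≤ (mk e1)∗ * mk (A.x q) := by
      intro q q' h
      induction h with
      | refl => exact le_mul_of_one_le_left' one_le_kstar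
      | tail hab hbc ihr =>
        rename_i b c
        have hcb : mk (A.x c) ≤ mk e1 * mk (A.x b) := by
          rw [h1 b]
          exact (le_sum hbc).trans le_self_add
        calc mk (A.x c) ≤ mk e1 * mk (A.x b) := hcb
          _ ≤ mk e1 * ((mk e1)∗ * mk (A.x q)) := mul_le_mul_right ihr _
          _ = (mk e1 * (mk e1)∗) * mk (A.x q) := (mul_assoc _ _ _).symm
          _ ≤ (mk e1)∗ * mk (A.x q) := mul_le_mul_left mul_kstar_le_kstar _
    refine ⟨Sh, fun q => esum (Sh q) (fun q' => (Exp.star e1).seq (D1 q')),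
      fun q => purePush_esum fun q' _ => PurePush.seq (PurePush.star he1) (hD1 q'),
      fun q => ?_⟩
    have hmkD : mk (esum (Sh q) (fun q' => (Exp.star e1).seq (D1 q'))) =
        ∑ q' ∈ Sh q, (mk e1)∗ * mk (D1 q') := by
      rw [mk_esum]
      exact Finset.sum_congr rfl fun q' _ => by rw [mk_seq, mk_star]
    rw [mk_star, hmkD]
    set RHS : KA V := (∑ q' ∈ Sh q, mk (A.x q')) + ∑ q' ∈ Sh q, (mk e1)∗ * mk (D1 q')
      with hRHS
    refine le_antisymm ?_ (add_le ?_ ?_)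
    · -- (mk e1)∗ * x q ≤ RHS
      refine kstar_mul_le ((le_sum (self_mem q)).trans le_self_add) ?_
      rw [hRHS, mul_add, Finset.mul_sum, Finset.mul_sum]
      refine add_le (sum_le fun q' hq' => ?_) (sum_le fun q' hq' => ?_)
      · rw [h1 q']
        refine add_le ?_ ?_
        · refine le_trans (sum_le fun q'' hq'' =>
            le_sum (g := fun q'' => mk (A.x q'')) (closed q q' q'' hq' hq'')) ?_
          exact le_self_add
        · refine le_trans ?_ (le_add_self (a := ∑ q' ∈ Sh q, (mk e1)∗ * mk (D1 q')))
          exact le_trans (le_mul_of_one_le_left' one_le_kstar) (le_sum hq')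
      · refine le_trans ?_ (le_add_self (a := ∑ q' ∈ Sh q, (mk e1)∗ * mk (D1 q')))
        refine le_trans ?_ (le_sum hq')
        rw [← mul_assoc]
        exact mul_le_mul_left mul_kstar_le_kstar _
    · exact sum_le fun q' hq' => reach_le q q' (Finset.mem_filter.mp hq').2
    · refine sum_le fun q' hq' => ?_
      have hD : mk (D1 q') ≤ mk e1 * mk (A.x q') := by
        rw [h1 q']; exact le_add_self
      calc (mk e1)∗ * mk (D1 q') ≤ (mk e1)∗ * (mk e1 * mk (A.x q')) :=
            mul_le_mul_right hD _
        _ ≤ (mk e1)∗ * (mk e1 * ((mk e1)∗ * mk (A.x q))) :=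
            mul_le_mul_right (mul_le_mul_right (reach_le q q' (Finset.mem_filter.mp hq').2) _) _
        _ = (((mk e1)∗ * mk e1) * (mk e1)∗) * mk (A.x q) := by
            rw [mul_assoc, mul_assoc]
        _ ≤ ((mk e1)∗ * (mk e1)∗) * mk (A.x q) :=
            mul_le_mul_left (mul_le_mul_left kstar_mul_le_kstar _) _
        _ = (mk e1)∗ * mk (A.x q) := by rw [kstar_mul_kstar]

theorem main {e f : Exp V} (he : PurePush e) (hf : PurePop f) :
    ∃ dbar d : Exp V, PurePop dbar ∧ PurePush d ∧ KAeq (e.seq f) (dbar.plus d) := by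
  classical
  obtain ⟨A, hA, hfA⟩ := pop_nfa hf
  obtain ⟨S, D, hD, hsd⟩ := push_key he A hA
  refine ⟨esum (A.I.biUnion S) A.x, esum A.I D,
    purePop_esum fun q _ => hA.1 q, purePush_esum fun q _ => hD q, ?_⟩
  apply exact
  rw [mk_seq, mk_plus, mk_esum, mk_esum, hfA, Finset.mul_sum,
    Finset.sum_congr rfl fun q _ => hsd q, Finset.sum_add_distrib, sum_biUnion_idem]

end StacKATProof

/-- For every pure push `e₁` and pure pop `ē₂`, there are a pure pop `d̄` and a pure
push `d` with `e₁ · ē₂ = d̄ + d` derivable in KA plus the push-pop axioms. -/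
theorem stmt17 {V : Type} [Fintype V] [Nonempty V] (e₁ ebar₂ : Exp V)
    (h₁ : PurePush e₁) (h₂ : PurePop ebar₂) :
    ∃ dbar d : Exp V, PurePop dbar ∧ PurePush d ∧ KAeq (e₁.seq ebar₂) (dbar.plus d) := by
  exact StacKATProof.main h₁ h₂
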